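/- Every point P of the Chiang-type lagrangian 𝓛₂ with μ₂(P) = −1/6 satisfies μ₁(P) = −1/6; that is, the intersection 𝓛₂ ∩ μ₂⁻¹(−1/6) lies in the middle level set of μ₁ on the level μ₂ = −1/6 (whose range there is [−1/3, 0]), so that the induced lagrangian ℓ₂ in the reduced space is a great circle. -/

import Mathlib

open Complex

/-- The vector `(X - iY, √2 i Z, X + iY)` in `ℂ³`. -/
noncomputable def sphereVec (X Y Z : ℝ) : Fin 3 → ℂ :=
  ![(X : ℂ) - Complex.I * Y, (Real.sqrt 2 : ℂ) * Complex.I * Z, (X : ℂ) + Complex.I * Y]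

lemma sphereVec_ne_zero {X Y Z : ℝ} (h : X ^ 2 + Y ^ 2 + Z ^ 2 = 1) :
    sphereVec X Y Z ≠ 0 := by
  intro h0
  have h0' : (X : ℂ) - Complex.I * Y = 0 := congrFun h0 0
  have h2' : (X : ℂ) + Complex.I * Y = 0 := congrFun h0 2
  have h1' : (Real.sqrt 2 : ℂ) * Complex.I * Z = 0 := congrFun h0 1
  have hX : X = 0 := by
    have := congrArg Complex.re (by linear_combination h0' + h2' : (2 : ℂ) * X = 0)
    simpa using this
  have hY : Y = 0 := by
    have := congrArg Complex.im (by linear_combination h2' - h0' : (2 : ℂ) * Complex.I * Y = 0)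
    simpa using this
  have hZ : Z = 0 := by
    rcases mul_eq_zero.mp h1' with h' | h'
    · rcases mul_eq_zero.mp h' with h'' | h''
      · exact absurd h'' (by simp [Complex.ext_iff, Real.sqrt_eq_zero'])
      · exact absurd h'' Complex.I_ne_zero
    · exact_mod_cast h'
  rw [hX, hY, hZ] at h
  norm_num at h

/-- The Chiang-type lagrangian `𝓛₂ ⊆ ℙ(ℂ³)`, in its real description. -/
noncomputable def ChiangL2 : Set (Projectivization ℂ (Fin 3 → ℂ)) :=
  {P | ∃ (X Y Z : ℝ) (h : X ^ 2 + Y ^ 2 + Z ^ 2 = 1),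
    P = Projectivization.mk ℂ (sphereVec X Y Z) (sphereVec_ne_zero h)}

/-- The moment map `μ₂` on (homogeneous coordinate vectors for) `ℙ(ℂ³)`:
`μ₂(z) = -|z₂|² / (2(|z₀|² + |z₁|² + |z₂|²))`. -/
noncomputable def mu2 (z : Fin 3 → ℂ) : ℝ :=
  -‖z 2‖ ^ 2 /
    (2 * (‖z 0‖ ^ 2 + ‖z 1‖ ^ 2 + ‖z 2‖ ^ 2))

/-- The moment map `μ₁` on (homogeneous coordinate vectors for) `ℙ(ℂ³)`:
`μ₁(z) = -|z₁|² / (2(|z₀|² + |z₁|² + |z₂|²))`. -/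
noncomputable def mu1 (z : Fin 3 → ℂ) : ℝ :=
  -‖z 1‖ ^ 2 /
    (2 * (‖z 0‖ ^ 2 + ‖z 1‖ ^ 2 + ‖z 2‖ ^ 2))

/-- `μ₂` as a function on the projective plane, via the canonical representative
(`μ₂` on vectors is scale-invariant, so this is the descended function). -/
noncomputable def mu2P (P : Projectivization ℂ (Fin 3 → ℂ)) : ℝ := mu2 P.rep

/-- `μ₁` as a function on the projective plane, via the canonical representative
(`μ₁` on vectors is scale-invariant, so this is the descended function). -/
noncomputable def mu1P (P : Projectivization ℂ (Fin 3 → ℂ)) : ℝ := mu1 P.rep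

lemma mu_smul (a : ℂˣ) (z : Fin 3 → ℂ) :
    mu2 ((a : ℂ) • z) = mu2 z ∧ mu1 ((a : ℂ) • z) = mu1 z := by
  have hk : ‖(a : ℂ)‖ ^ 2 ≠ 0 := pow_ne_zero _ (by simp [a.ne_zero])
  constructor <;>
  · simp only [mu2, mu1, Pi.smul_apply, smul_eq_mul, norm_mul, mul_pow]
    rw [show (2:ℝ) * (‖(a:ℂ)‖^2 * ‖z 0‖^2 +
        ‖(a:ℂ)‖^2 * ‖z 1‖^2 +
        ‖(a:ℂ)‖^2 * ‖z 2‖^2) =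
        ‖(a:ℂ)‖^2 *
          (2 * (‖z 0‖^2 + ‖z 1‖^2 + ‖z 2‖^2)) by ring]
    rw [neg_mul_eq_mul_neg, mul_div_mul_left _ _ hk]

lemma mu2P_mk (z : Fin 3 → ℂ) (hz : z ≠ 0) : mu2P (Projectivization.mk ℂ z hz) = mu2 z := by
  obtain ⟨a, ha⟩ := (Projectivization.mk_eq_mk_iff ℂ _ _ (Projectivization.rep_nonzero _) hz).mp
    (Projectivization.mk_rep (Projectivization.mk ℂ z hz))
  rw [mu2P, ← ha]
  exact (mu_smul a z).1

lemma mu1P_mk (z : Fin 3 → ℂ) (hz : z ≠ 0) : mu1P (Projectivization.mk ℂ z hz) = mu1 z := by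
  obtain ⟨a, ha⟩ := (Projectivization.mk_eq_mk_iff ℂ _ _ (Projectivization.rep_nonzero _) hz).mp
    (Projectivization.mk_rep (Projectivization.mk ℂ z hz))
  rw [mu1P, ← ha]
  exact (mu_smul a z).2

lemma abs_sphere (X Y Z : ℝ) :
    ‖sphereVec X Y Z 0‖ ^ 2 = X ^ 2 + Y ^ 2 ∧
    ‖sphereVec X Y Z 1‖ ^ 2 = 2 * Z ^ 2 ∧
    ‖sphereVec X Y Z 2‖ ^ 2 = X ^ 2 + Y ^ 2 := by
  refine ⟨?_, ?_, ?_⟩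
  · rw [show sphereVec X Y Z 0 = (X : ℂ) - Complex.I * Y from rfl, Complex.sq_norm,
      Complex.normSq_apply]
    simp
    ring
  · rw [show sphereVec X Y Z 1 = (Real.sqrt 2 : ℂ) * Complex.I * Z from rfl,
      norm_mul, norm_mul, Complex.norm_I, Complex.norm_real, Complex.norm_real,
      Real.norm_eq_abs, Real.norm_eq_abs,
      _root_.abs_of_nonneg (Real.sqrt_nonneg 2), mul_pow, mul_pow,
      Real.sq_sqrt (by norm_num : (0:ℝ) ≤ 2), _root_.sq_abs]
    ring
  · rw [show sphereVec X Y Z 2 = (X : ℂ) + Complex.I * Y from rfl, Complex.sq_norm,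
      Complex.normSq_apply]
    simp
    ring

/-- Every point `P ∈ 𝓛₂` with `μ₂(P) = -1/6` satisfies `μ₁(P) = -1/6`,
i.e. `𝓛₂ ∩ μ₂⁻¹(-1/6)` lies in the middle level set of `μ₁` on the level `μ₂ = -1/6`, whose
range there is `[-1/3, 0]`; so the induced lagrangian in the reduced space is a great
circle. -/
theorem stmt_14 :
    (∀ P ∈ ChiangL2, mu2P P = -(1 / 6) → mu1P P = -(1 / 6)) ∧
    mu1P '' {Q | mu2P Q = -(1 / 6)} = Set.Icc (-(1 / 3) : ℝ) 0 := by
  constructor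
  · rintro P ⟨X, Y, Z, h, rfl⟩ hP
    obtain ⟨e0, e1, e2⟩ := abs_sphere X Y Z
    rw [mu2P_mk] at hP
    rw [mu1P_mk, mu1, e0, e1, e2]
    rw [mu2, e0, e1, e2] at hP
    rw [show (2:ℝ) * (X^2+Y^2 + 2*Z^2 + (X^2+Y^2)) = 4 by nlinarith] at hP ⊢
    linarith
  · ext t
    constructor
    · rintro ⟨P, hP, rfl⟩
      simp only [Set.mem_setOf_eq] at hP
      have hz : P.rep ≠ 0 := Projectivization.rep_nonzero P
      have hA0 : 0 ≤ ‖P.rep 0‖ ^ 2 := sq_nonneg _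
      have hB0 : 0 ≤ ‖P.rep 1‖ ^ 2 := sq_nonneg _
      have hC0 : 0 ≤ ‖P.rep 2‖ ^ 2 := sq_nonneg _
      have hs : 0 < ‖P.rep 0‖ ^ 2 + ‖P.rep 1‖ ^ 2 +
          ‖P.rep 2‖ ^ 2 := by
        obtain ⟨i, hi⟩ := Function.ne_iff.mp hz
        have : i = 0 ∨ i = 1 ∨ i = 2 := by omega
        rcases this with rfl | rfl | rfl <;>
          linarith [pow_pos (norm_pos_iff.mpr hi) 2]
      rw [mu2P, mu2] at hP
      rw [div_eq_iff (by linarith)] at hP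
      rw [mu1P, mu1]
      constructor
      · rw [le_div_iff₀ (by linarith)]
        linarith
      · rw [div_le_iff₀ (by linarith)]
        linarith
    · rintro ⟨h1, h2⟩
      have ha0 : (0:ℝ) ≤ 2/3 + 2*t := by linarith
      have hb0 : (0:ℝ) ≤ -(2*t) := by linarith
      set w : Fin 3 → ℂ :=
        ![(Real.sqrt (2/3 + 2*t) : ℂ), (Real.sqrt (-(2*t)) : ℂ), (Real.sqrt (1/3) : ℂ)] with hw
      have hwz : w ≠ 0 := by
        intro h0
        have := congrFun h0 2
        simp only [hw, Matrix.cons_val_two, Matrix.tail_cons, Matrix.head_cons, Pi.zero_apply,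
          Complex.ofReal_eq_zero] at this
        exact absurd this (by positivity)
      have key : ∀ x : ℝ, 0 ≤ x → ‖((Real.sqrt x : ℝ) : ℂ)‖ ^ 2 = x := by
        intro x hx
        rw [Complex.norm_real, Real.norm_eq_abs, _root_.abs_of_nonneg (Real.sqrt_nonneg x), Real.sq_sqrt hx]
      have e0 : ‖w 0‖ ^ 2 = 2/3 + 2*t := key _ ha0
      have e1 : ‖w 1‖ ^ 2 = -(2*t) := key _ hb0
      have e2 : ‖w 2‖ ^ 2 = 1/3 := key _ (by norm_num)
      refine ⟨Projectivization.mk ℂ w hwz, ?_, ?_⟩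
      · show mu2P _ = _
        rw [mu2P_mk, mu2, e0, e1, e2]
        rw [show (2:ℝ) * (2/3 + 2*t + -(2*t) + 1/3) = 2 by ring]
        norm_num
      · rw [mu1P_mk, mu1, e0, e1, e2]
        rw [show (2:ℝ) * (2/3 + 2*t + -(2*t) + 1/3) = 2 by ring]
        ring
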